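/- Let n > 1 and let G ⊆ K_{n,n} be strictly totally ordered. Then the coefficient of G in the real multilinear polynomial of the dual function BPM*_n equals (−1)^{n+1}. -/
import Mathlib


open Finset
open scoped Classical

/-- Edges of the complete bipartite graph `K_{n,n}` on labeled parts of size `n`. -/
abbrev Edge (n : ℕ) := Fin n × Fin n

/-- `M` is (the edge set of) a perfect matching of `K_{n,n}`. -/
def isPM {n : ℕ} (M : Finset (Edge n)) : Prop :=
  ∃ σ : Equiv.Perm (Fin n), M = Finset.univ.image fun i => (i, σ i)

/-- `G` is matching-covered: its edge set is a (nonempty) union of perfect matchings. -/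
def matchingCovered {n : ℕ} (G : Finset (Edge n)) : Prop :=
  ∃ S : Finset (Finset (Edge n)), S.Nonempty ∧ (∀ M ∈ S, isPM M) ∧ S.sup id = G

/-- `G` contains a perfect matching. -/
def hasPM {n : ℕ} (G : Finset (Edge n)) : Prop :=
  ∃ σ : Equiv.Perm (Fin n), ∀ i, (i, σ i) ∈ G

/-- The bipartite graph on the vertex set `Fin n ⊕ Fin n` with edge set `G`. -/
def graphOn {n : ℕ} (G : Finset (Edge n)) : SimpleGraph (Fin n ⊕ Fin n) :=
  SimpleGraph.fromRel fun u v => ∃ e ∈ G, u = Sum.inl e.1 ∧ v = Sum.inr e.2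

/-- The number of connected components of `G` (as a spanning subgraph of `K_{n,n}`). -/
noncomputable def numComponents {n : ℕ} (G : Finset (Edge n)) : ℕ :=
  Nat.card (graphOn G).ConnectedComponent

/-- The cyclomatic number `χ(G) = |E(G)| − |V(G)| + |C(G)|`. -/
noncomputable def cyclo {n : ℕ} (G : Finset (Edge n)) : ℤ :=
  (G.card : ℤ) + numComponents G - 2 * n

/-- `G` is elementary: a connected matching-covered graph. -/
def elementary {n : ℕ} (G : Finset (Edge n)) : Prop :=
  matchingCovered G ∧ (graphOn G).Connected

/-- The bipartite perfect matching decision function, on inputs `x : Edge n → Bool`. -/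
def BPMb (n : ℕ) (x : Edge n → Bool) : Prop :=
  ∃ σ : Equiv.Perm (Fin n), ∀ i, x (i, σ i) = true

/-- `H` is a Hall violator: a complete bipartite graph `K_{X,Y}` with `|X| + |Y| = n + 1`
(the remaining vertices isolated). -/
def HallViolator {n : ℕ} (H : Finset (Edge n)) : Prop :=
  ∃ X Y : Finset (Fin n), X.card + Y.card = n + 1 ∧ H = X ×ˢ Y

/-- `G` is covered by Hall violators: its edge set is a nonempty union of Hall violators. -/
def HVCovered {n : ℕ} (G : Finset (Edge n)) : Prop :=
  ∃ S : Finset (Finset (Edge n)), S.Nonempty ∧ (∀ H ∈ S, HallViolator H) ∧ S.sup id = G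

/-- The neighbourhood of a left vertex `a` in the bipartite graph `G`. -/
def nbhd {n : ℕ} (G : Finset (Edge n)) (a : Fin n) : Finset (Fin n) :=
  (G.filter fun e => e.1 = a).image Prod.snd

/-- `G` is totally ordered: its left vertices can be ordered so that their neighbourhoods
are nested, `N(a_1) ⊇ N(a_2) ⊇ … ⊇ N(a_n)`. -/
def totallyOrdered {n : ℕ} (G : Finset (Edge n)) : Prop :=
  ∃ σ : Equiv.Perm (Fin n), ∀ i j : Fin n, i ≤ j → nbhd G (σ j) ⊆ nbhd G (σ i)

/-- `G` is strictly totally ordered: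
`N(a_1) ⊋ N(a_2) ⊋ … ⊋ N(a_n) ⊋ ∅` for some ordering of the left vertices. -/
def strictlyTotallyOrdered {n : ℕ} (G : Finset (Edge n)) : Prop :=
  ∃ σ : Equiv.Perm (Fin n),
    (∀ i j : Fin n, i < j → nbhd G (σ j) ⊂ nbhd G (σ i)) ∧
    ∀ i : Fin n, (nbhd G (σ i)).Nonempty

section Aux
variable {α : Type*} [DecidableEq α]

lemma prod_indicator' (S T : Finset α) :
    (∏ e ∈ S, (if e ∈ T then (1:ℝ) else 0)) = if S ⊆ T then 1 else 0 := by
  by_cases h : S ⊆ T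
  · rw [if_pos h]
    exact Finset.prod_eq_one fun e he => if_pos (h he)
  · rw [if_neg h]
    obtain ⟨e, heS, heT⟩ := Finset.not_subset.mp h
    exact Finset.prod_eq_zero heS (if_neg heT)

lemma sum_powerset_neg_one_real (s : Finset α) :
    (∑ R ∈ s.powerset, (-1:ℝ) ^ R.card) = if s = ∅ then 1 else 0 := by
  have := @Finset.sum_powerset_neg_one_pow_card α _ s
  have h2 : ((∑ m ∈ s.powerset, (-1 : ℤ) ^ m.card : ℤ) : ℝ)
      = ∑ R ∈ s.powerset, (-1:ℝ) ^ R.card := by push_cast; rfl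
  rw [← h2, this]
  split <;> simp

lemma sum_moebius' (G U : Finset α) :
    (∑ T ∈ G.powerset, (-1:ℝ) ^ ((G \ T).card) * (if U ⊆ T then 1 else 0))
      = if U = G then 1 else 0 := by
  by_cases hUG : U ⊆ G
  · have hstep : ∀ T ∈ G.powerset,
        (-1:ℝ) ^ ((G \ T).card) * (if U ⊆ T then 1 else 0)
          = if U ⊆ T then (-1:ℝ) ^ ((G \ T).card) else 0 := by
      intro T _; split <;> simp
    rw [Finset.sum_congr rfl hstep, ← Finset.sum_filter]
    have hbij : ∑ T ∈ G.powerset.filter (fun T => U ⊆ T), (-1:ℝ) ^ ((G \ T).card)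
        = ∑ R ∈ (G \ U).powerset, (-1:ℝ) ^ (((G \ U) \ R).card) := by
      refine Finset.sum_nbij' (fun T => T \ U) (fun R => U ∪ R) ?_ ?_ ?_ ?_ ?_
      · intro T hT
        rw [Finset.mem_filter, Finset.mem_powerset] at hT
        exact Finset.mem_powerset.mpr (Finset.sdiff_subset_sdiff hT.1 Finset.Subset.rfl)
      · intro R hR
        rw [Finset.mem_powerset] at hR
        rw [Finset.mem_filter, Finset.mem_powerset]
        refine ⟨Finset.union_subset hUG (hR.trans Finset.sdiff_subset), Finset.subset_union_left⟩
      · intro T hT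
        rw [Finset.mem_filter] at hT
        exact Finset.union_sdiff_of_subset hT.2
      · intro R hR
        rw [Finset.mem_powerset] at hR
        have : Disjoint U R := Finset.disjoint_of_subset_right hR Finset.disjoint_sdiff
        exact Finset.union_sdiff_cancel_left this
      · intro T hT
        rw [Finset.mem_filter, Finset.mem_powerset] at hT
        congr 2
        ext x
        simp only [Finset.mem_sdiff]
        constructor
        · intro ⟨hxG, hxT⟩; exact ⟨⟨hxG, fun hxU => hxT (hT.2 hxU)⟩, fun ⟨h1, _⟩ => hxT h1⟩
        · intro ⟨⟨hxG, hxU⟩, hx⟩; exact ⟨hxG, fun hxT => hx ⟨hxT, hxU⟩⟩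
    rw [hbij]
    set s := G \ U with hs
    have hterm : ∀ R ∈ s.powerset, (-1:ℝ) ^ ((s \ R).card)
        = (-1:ℝ) ^ s.card * (-1:ℝ) ^ R.card := by
      intro R hR
      rw [Finset.mem_powerset] at hR
      have hc : (s \ R).card + R.card = s.card := Finset.card_sdiff_add_card_eq_card hR
      have : (-1:ℝ) ^ ((s \ R).card) * ((-1:ℝ) ^ R.card * (-1:ℝ) ^ R.card)
          = (-1:ℝ) ^ s.card * (-1:ℝ) ^ R.card := by
        rw [← mul_assoc, ← pow_add, hc]
      have heven : (-1:ℝ) ^ (R.card + R.card) = 1 := Even.neg_one_pow ⟨R.card, rfl⟩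
      rw [← this, ← pow_add, heven, mul_one]
    rw [Finset.sum_congr rfl hterm, ← Finset.mul_sum, sum_powerset_neg_one_real]
    by_cases hempty : s = ∅
    · have : U = G := Finset.Subset.antisymm hUG (by
        intro x hx
        by_contra hxU
        exact (Finset.eq_empty_iff_forall_notMem.mp hempty x) (Finset.mem_sdiff.mpr ⟨hx, hxU⟩))
      rw [if_pos hempty, if_pos this, hempty]
      simp
    · have : U ≠ G := fun h => hempty (by rw [hs, h]; exact Finset.sdiff_self G)
      rw [if_neg hempty, if_neg this, mul_zero]
  · have : ∀ T ∈ G.powerset, (-1:ℝ) ^ ((G \ T).card) * (if U ⊆ T then 1 else 0) = 0 := by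
      intro T hT
      rw [Finset.mem_powerset] at hT
      rw [if_neg (fun h => hUG (h.trans hT)), mul_zero]
    rw [Finset.sum_congr rfl this, Finset.sum_const_zero]
    have : U ≠ G := fun h => hUG (h ▸ Finset.Subset.rfl)
    rw [if_neg this]



lemma mem_nbhd' {n : ℕ} (G : Finset (Edge n)) (a b : Fin n) :
    b ∈ nbhd G a ↔ (a, b) ∈ G := by
  simp only [nbhd, Finset.mem_image, Finset.mem_filter]
  constructor
  · rintro ⟨e, ⟨heG, he1⟩, he2⟩
    have : e = (a, b) := Prod.ext he1 he2
    exact this ▸ heG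
  · intro h
    exact ⟨(a, b), ⟨h, rfl⟩, rfl⟩

lemma chainCard {n : ℕ} (N : Fin n → Finset (Fin n))
    (hst : ∀ i j : Fin n, i < j → N j ⊂ N i) (hne : ∀ i, (N i).Nonempty)
    (i : Fin n) : (N i).card = n - i.val := by
  have hub : ∀ k : ℕ, ∀ h : k < n, (N ⟨k, h⟩).card + k ≤ n := by
    intro k
    induction k with
    | zero =>
      intro h
      simpa using (Finset.card_le_card (Finset.subset_univ _)).trans (by simp)
    | succ m ih =>
      intro h
      have hm : m < n := Nat.lt_of_succ_lt h
      have hlt : (⟨m, hm⟩ : Fin n) < ⟨m + 1, h⟩ := by simp [Fin.mk_lt_mk]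
      have := Finset.card_lt_card (hst _ _ hlt)
      have := ih hm
      omega
  have hlb : ∀ m : ℕ, ∀ k : ℕ, ∀ h : k < n, k + m + 1 = n → m + 1 ≤ (N ⟨k, h⟩).card := by
    intro m
    induction m with
    | zero =>
      intro k h _
      exact Finset.Nonempty.card_pos (hne _)
    | succ m ih =>
      intro k h hk
      have h1 : k + 1 < n := by omega
      have hlt : (⟨k, h⟩ : Fin n) < ⟨k + 1, h1⟩ := by simp [Fin.mk_lt_mk]
      have := Finset.card_lt_card (hst _ _ hlt)
      have := ih (k + 1) h1 (by omega)
      omega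
  have h1 := hub i.val i.isLt
  have h2 := hlb (n - i.val - 1) i.val i.isLt (by omega)
  simp only [Fin.eta] at h1 h2
  omega

lemma final_calc {α β : Type*} [DecidableEq α] [Fintype β]
    (G : Finset α) (hGne : G.Nonempty) (V : β → Finset α)
    (hsupV : ∀ I : Finset β, I.sup V = G ↔ I = Finset.univ)
    (F : Finset α → ℝ)
    (hF : ∀ T ∈ G.powerset, F T = 1 - ∏ k : β, (1 - if V k ⊆ T then (1:ℝ) else 0)) :
    (∑ T ∈ G.powerset, (-1:ℝ) ^ ((G \ T).card) * F T) = -(-1:ℝ) ^ (Fintype.card β) := by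
  have hprod : ∀ T : Finset α, (∏ k : β, (1 - if V k ⊆ T then (1:ℝ) else 0))
      = ∑ I ∈ (Finset.univ : Finset β).powerset,
          (-1:ℝ) ^ I.card * (if I.sup V ⊆ T then 1 else 0) := by
    intro T
    have h1 : ∀ k : β, (1 - if V k ⊆ T then (1:ℝ) else 0)
        = (-(if V k ⊆ T then (1:ℝ) else 0)) + 1 := fun k => by ring
    rw [Finset.prod_congr rfl (fun k _ => h1 k), Finset.prod_add]
    refine Finset.sum_congr rfl fun I _ => ?_
    rw [Finset.prod_const_one, mul_one]
    have h2 : (∏ k ∈ I, (-(if V k ⊆ T then (1:ℝ) else 0)))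
        = (-1:ℝ) ^ I.card * ∏ k ∈ I, (if V k ⊆ T then (1:ℝ) else 0) := by
      rw [← Finset.prod_const (-1:ℝ), ← Finset.prod_mul_distrib]
      exact Finset.prod_congr rfl fun k _ => by ring
    rw [h2]
    congr 1
    have h3 : (I.sup V ⊆ T) ↔ ∀ k ∈ I, V k ⊆ T := by
      constructor
      · exact fun h k hk => (Finset.le_sup hk).trans h
      · exact fun h => Finset.sup_le h
    by_cases h : ∀ k ∈ I, V k ⊆ T
    · rw [if_pos (h3.mpr h)]
      exact Finset.prod_eq_one fun k hk => if_pos (h k hk)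
    · rw [if_neg (fun hh => h (h3.mp hh))]
      push_neg at h
      obtain ⟨k, hkI, hk⟩ := h
      exact Finset.prod_eq_zero hkI (if_neg hk)
  have hsplit : ∀ T ∈ G.powerset, (-1:ℝ) ^ ((G \ T).card) * F T
      = (-1:ℝ) ^ ((G \ T).card)
        - ∑ I ∈ (Finset.univ : Finset β).powerset,
            (-1:ℝ) ^ I.card * ((-1:ℝ) ^ ((G \ T).card) * (if I.sup V ⊆ T then 1 else 0)) := by
    intro T hT
    rw [hF T hT, mul_sub, mul_one, hprod T, Finset.mul_sum]
    congr 1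
    exact Finset.sum_congr rfl fun I _ => by ring
  rw [Finset.sum_congr rfl hsplit, Finset.sum_sub_distrib]
  have hfirst : (∑ T ∈ G.powerset, (-1:ℝ) ^ ((G \ T).card)) = 0 := by
    have h := sum_moebius' G (∅ : Finset α)
    simp only [Finset.empty_subset, if_true, mul_one] at h
    rw [h, if_neg (Ne.symm (Finset.nonempty_iff_ne_empty.mp hGne))]
  have hsecond : (∑ T ∈ G.powerset, ∑ I ∈ (Finset.univ : Finset β).powerset,
      (-1:ℝ) ^ I.card * ((-1:ℝ) ^ ((G \ T).card) * (if I.sup V ⊆ T then 1 else 0)))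
      = (-1:ℝ) ^ (Fintype.card β) := by
    rw [Finset.sum_comm]
    have hinner : ∀ I ∈ (Finset.univ : Finset β).powerset,
        (∑ T ∈ G.powerset, (-1:ℝ) ^ I.card *
          ((-1:ℝ) ^ ((G \ T).card) * (if I.sup V ⊆ T then 1 else 0)))
        = if I = Finset.univ then (-1:ℝ) ^ I.card else 0 := by
      intro I _
      rw [← Finset.mul_sum, sum_moebius' G (I.sup V)]
      by_cases h : I = Finset.univ
      · rw [if_pos ((hsupV I).mpr h), if_pos h, mul_one]
      · rw [if_neg (fun hh => h ((hsupV I).mp hh)), if_neg h, mul_zero]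
    rw [Finset.sum_congr rfl hinner,
      Finset.sum_ite_eq' ((Finset.univ : Finset β).powerset) Finset.univ
        (fun I => (-1:ℝ) ^ I.card)]
    simp
  rw [hfirst, hsecond]
  ring


set_option maxHeartbeats 1600000

/-- for `n > 1`, every strictly totally ordered `G ⊆ K_{n,n}` has coefficient
`(−1)^{n+1}` in the unique real multilinear polynomial representing the dual function
`BPM*_n(x) = 1 − BPM_n(1−x)`. -/
theorem stmt18 (n : ℕ) (hn : 1 < n) (a : Finset (Edge n) → ℝ)
    (ha : ∀ x : Edge n → Bool,
      (∑ S : Finset (Edge n), a S * ∏ e ∈ S, (if x e then (1 : ℝ) else 0))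
        = (if BPMb n (fun e => ! x e) then 0 else 1))
    (G : Finset (Edge n)) (hG : strictlyTotallyOrdered G) :
    a G = (-1 : ℝ) ^ (n + 1) := by
  obtain ⟨σ, hst, hne⟩ := hG
  set N : Fin n → Finset (Fin n) := fun i => nbhd G (σ i) with hN
  have hcard : ∀ i : Fin n, (N i).card = n - i.val := chainCard N hst hne
  have hmemG : ∀ (i b : Fin n), (σ i, b) ∈ G ↔ b ∈ N i :=
    fun i b => (mem_nbhd' G (σ i) b).symm
  have hNmono : ∀ i j : Fin n, i ≤ j → N j ⊆ N i := by
    intro i j hij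
    rcases eq_or_lt_of_le hij with h | h
    · rw [h]
    · exact (hst i j h).subset
  set V : Fin n → Finset (Edge n) := fun k => ((Finset.Iic k).image σ) ×ˢ N k with hV
  have hVmem : ∀ k i b : Fin n, ((σ i, b) ∈ V k) ↔ (i ≤ k ∧ b ∈ N k) := by
    intro k i b
    simp only [hV, Finset.mem_product, Finset.mem_image, Finset.mem_Iic]
    constructor
    · rintro ⟨⟨j, hj, hji⟩, hb⟩
      exact ⟨(σ.injective hji) ▸ hj, hb⟩
    · rintro ⟨hik, hb⟩
      exact ⟨⟨i, hik, rfl⟩, hb⟩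
  have hVG : ∀ k, V k ⊆ G := by
    intro k e he
    rw [hV, Finset.mem_product] at he
    obtain ⟨j, hj, hje⟩ := Finset.mem_image.mp he.1
    rw [Finset.mem_Iic] at hj
    have hNk : e.2 ∈ N j := hNmono j k hj he.2
    have : (σ j, e.2) ∈ G := (hmemG j e.2).mpr hNk
    rwa [hje, Prod.mk.eta] at this
  have hbexists : ∀ k : Fin n, ∃ b, b ∈ N k ∧ ∀ m : Fin n, k < m → b ∉ N m := by
    intro k
    by_cases h : (k : ℕ) + 1 < n
    · have hss := hst k ⟨k.val + 1, h⟩ (by rw [Fin.lt_def]; simp)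
      obtain ⟨b, hbk, hbk1⟩ := Finset.exists_of_ssubset hss
      refine ⟨b, hbk, fun m hm hbm => hbk1 ?_⟩
      have hle : (⟨k.val + 1, h⟩ : Fin n) ≤ m := by
        rw [Fin.le_def]
        rw [Fin.lt_def] at hm
        exact hm
      exact hNmono _ m hle hbm
    · obtain ⟨b, hb⟩ := hne k
      refine ⟨b, hb, fun m hm _ => ?_⟩
      have := m.isLt
      rw [Fin.lt_def] at hm
      omega
  choose bb hbbN hbbOnly using hbexists
  have hbbV : ∀ k m : Fin n, (σ k, bb k) ∈ V m → m = k := by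
    intro k m h
    rw [hVmem] at h
    refine le_antisymm ?_ h.1
    by_contra hlt
    push_neg at hlt
    exact hbbOnly k m hlt h.2
  have hsupV : ∀ I : Finset (Fin n), (I.sup V = G ↔ I = Finset.univ) := by
    intro I
    constructor
    · intro hIG
      by_contra hI
      obtain ⟨k, hk⟩ : ∃ k, k ∉ I := by
        by_contra hall; push_neg at hall; exact hI (Finset.eq_univ_iff_forall.mpr hall)
      have hGmem : (σ k, bb k) ∈ G := (hmemG k (bb k)).mpr (hbbN k)
      rw [← hIG] at hGmem
      obtain ⟨m, hmI, hmV⟩ := Finset.mem_sup.mp hGmem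
      exact hk ((hbbV k m hmV) ▸ hmI)
    · intro hI
      subst hI
      apply Finset.Subset.antisymm
      · exact Finset.sup_le fun k _ => hVG k
      · intro e he
        have he' : e = (σ (σ.symm e.1), e.2) := by simp
        rw [he'] at he ⊢
        rw [hmemG] at he
        exact Finset.mem_sup.mpr
          ⟨σ.symm e.1, Finset.mem_univ _, (hVmem _ _ _).mpr ⟨le_refl _, he⟩⟩
  have hC : ∀ T : Finset (Edge n), T ⊆ G →
      ((∃ π : Equiv.Perm (Fin n), ∀ i, (i, π i) ∉ T) ↔ ∀ k, ¬ V k ⊆ T) := by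
    intro T hTG
    constructor
    · rintro ⟨π, hπ⟩ k hVk
      have hmap : ∀ i ∈ Finset.Iic k, π (σ i) ∈ Finset.univ \ N k := by
        intro i hi
        rw [Finset.mem_Iic] at hi
        rw [Finset.mem_sdiff]
        exact ⟨Finset.mem_univ _, fun hb => hπ (σ i) (hVk ((hVmem k i _).mpr ⟨hi, hb⟩))⟩
      have hinj : Set.InjOn (fun i => π (σ i)) (Finset.Iic k) :=
        fun x _ y _ h => σ.injective (π.injective h)
      have hle := Finset.card_le_card_of_injOn _ hmap hinj
      rw [Fin.card_Iic] at hle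
      have hcardsd : (Finset.univ \ N k).card = n - (N k).card := by
        rw [Finset.card_sdiff_of_subset (Finset.subset_univ _)]
        simp
      rw [hcardsd, hcard k] at hle
      have := k.isLt
      omega
    · intro hnoV
      set t : Fin n → Finset (Fin n) := fun i => Finset.univ.filter (fun b => (i, b) ∉ T)
        with ht
      have hHall : ∀ s : Finset (Fin n), s.card ≤ (s.biUnion t).card := by
        intro s
        by_contra hlt
        push_neg at hlt
        set Y : Finset (Fin n) := Finset.univ \ s.biUnion t with hY
        have hXY : s ×ˢ Y ⊆ T := by
          intro e he
          rw [Finset.mem_product] at he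
          have h2 := (Finset.mem_sdiff.mp he.2).2
          by_contra heT
          apply h2
          apply Finset.mem_biUnion.mpr
          refine ⟨e.1, he.1, Finset.mem_filter.mpr ⟨Finset.mem_univ _, ?_⟩⟩
          rwa [Prod.mk.eta]
        have huniv : (Finset.univ : Finset (Fin n)).card = n := by simp
        have hYcard : Y.card + (s.biUnion t).card = n := by
          rw [hY, Finset.card_sdiff_of_subset (Finset.subset_univ _), huniv]
          have : (s.biUnion t).card ≤ n := by
            simpa using Finset.card_le_univ (s.biUnion t)
          omega
        set X' : Finset (Fin n) := s.image σ.symm with hX'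
        have hX'card : X'.card = s.card := Finset.card_image_of_injective _ σ.symm.injective
        have hsne : s.Nonempty := by
          rw [← Finset.card_pos]; omega
        have hX'ne : X'.Nonempty := hsne.image _
        set m := X'.max' hX'ne with hm
        have hmX' : m ∈ X' := X'.max'_mem hX'ne
        have hX'sub : X' ⊆ Finset.Iic m := fun x hx => Finset.mem_Iic.mpr (X'.le_max' x hx)
        have hYN : ∀ i ∈ X', Y ⊆ N i := by
          intro i hi b hb
          obtain ⟨x, hxs, hxi⟩ := Finset.mem_image.mp hi
          have hσi : σ i ∈ s := by rw [← hxi]; simpa using hxs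
          have : (σ i, b) ∈ T := hXY (Finset.mem_product.mpr ⟨hσi, hb⟩)
          exact (hmemG i b).mp (hTG this)
        have hYm : Y ⊆ N m := hYN m hmX'
        have hNmcard := hcard m
        have hIiccard : (Finset.Iic m).card = m.val + 1 := Fin.card_Iic m
        have hYle : Y.card ≤ n - m.val := hNmcard ▸ Finset.card_le_card hYm
        have hX'le : X'.card ≤ m.val + 1 := hIiccard ▸ Finset.card_le_card hX'sub
        have hmlt := m.isLt
        have hX'eq : X' = Finset.Iic m :=
          Finset.eq_of_subset_of_card_le hX'sub (by omega)
        have hYeq : Y = N m := Finset.eq_of_subset_of_card_le hYm (by omega)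
        have himg : X'.image σ = s := by
          rw [hX', Finset.image_image]
          have : (σ : Fin n → Fin n) ∘ (σ.symm : Fin n → Fin n) = id := by
            funext x; simp
          rw [this, Finset.image_id]
        have hVT : V m ⊆ T := by
          have : V m = s ×ˢ Y := by
            rw [hV]
            dsimp only
            rw [← hX'eq, himg, hYeq]
          rw [this]
          exact hXY
        exact hnoV m hVT
      obtain ⟨f, hfinj, hft⟩ := (Finset.all_card_le_biUnion_card_iff_exists_injective t).mp hHall
      have hfbij : Function.Bijective f := Finite.injective_iff_bijective.mp hfinj
      refine ⟨Equiv.ofBijective f hfbij, fun i => ?_⟩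
      have h1 := hft i
      rw [ht] at h1
      simp only [Finset.mem_filter] at h1
      exact h1.2
  -- master equation
  have key : ∀ T : Finset (Edge n),
      (∑ S : Finset (Edge n), a S * (if S ⊆ T then (1:ℝ) else 0))
        = (if BPMb n (fun e => !decide (e ∈ T)) then 0 else 1) := by
    intro T
    have h := ha (fun e => decide (e ∈ T))
    simp only [decide_eq_true_eq] at h
    rw [← h]
    exact Finset.sum_congr rfl fun S _ => by rw [prod_indicator']
  have hmaster : (∑ T ∈ G.powerset, (-1:ℝ) ^ ((G \ T).card) *
      (if BPMb n (fun e => !decide (e ∈ T)) then 0 else 1)) = a G := by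
    have step1 : (∑ T ∈ G.powerset, (-1:ℝ) ^ ((G \ T).card) *
        (if BPMb n (fun e => !decide (e ∈ T)) then 0 else 1))
        = ∑ T ∈ G.powerset, ∑ S : Finset (Edge n),
            a S * ((-1:ℝ) ^ ((G \ T).card) * (if S ⊆ T then 1 else 0)) := by
      refine Finset.sum_congr rfl fun T _ => ?_
      rw [← key T, Finset.mul_sum]
      exact Finset.sum_congr rfl fun S _ => by ring
    rw [step1, Finset.sum_comm]
    have step2 : ∀ S : Finset (Edge n),
        (∑ T ∈ G.powerset, a S * ((-1:ℝ) ^ ((G \ T).card) * (if S ⊆ T then 1 else 0)))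
          = a S * (if S = G then 1 else 0) := by
      intro S
      rw [← Finset.mul_sum]
      congr 1
      exact sum_moebius' G S
    rw [Finset.sum_congr rfl fun S _ => step2 S]
    rw [Finset.sum_congr rfl fun S _ => (by split <;> simp_all :
      a S * (if S = G then (1:ℝ) else 0) = if S = G then a S else 0)]
    rw [Finset.sum_ite_eq' Finset.univ G a]
    simp
  have hGne : G.Nonempty := by
    have h0 : (0:ℕ) < n := by omega
    exact ⟨(σ ⟨0, h0⟩, bb ⟨0, h0⟩), (hmemG _ _).mpr (hbbN _)⟩
  -- rewrite the value function using Hall violators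
  have hfT : ∀ T ∈ G.powerset, (if BPMb n (fun e => !decide (e ∈ T)) then (0:ℝ) else 1)
      = 1 - ∏ k : Fin n, (1 - if V k ⊆ T then (1:ℝ) else 0) := by
    intro T hT
    rw [Finset.mem_powerset] at hT
    have hBPMiff : BPMb n (fun e => !decide (e ∈ T)) ↔ ∀ k, ¬ V k ⊆ T := by
      have hunfold : BPMb n (fun e => !decide (e ∈ T))
          ↔ ∃ π : Equiv.Perm (Fin n), ∀ i, (i, π i) ∉ T := by
        simp [BPMb]
      rw [hunfold]
      exact hC T hT
    by_cases hex : ∃ k, V k ⊆ T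
    · obtain ⟨k, hk⟩ := hex
      rw [if_neg (fun h => (hBPMiff.mp h) k hk)]
      rw [Finset.prod_eq_zero (Finset.mem_univ k) (by rw [if_pos hk]; ring)]
      ring
    · push_neg at hex
      rw [if_pos (hBPMiff.mpr hex)]
      rw [Finset.prod_eq_one (fun k _ => by rw [if_neg (hex k)]; ring)]
      ring
  have hcalc := final_calc G hGne V hsupV
      (fun T => if BPMb n (fun e => !decide (e ∈ T)) then (0:ℝ) else 1) hfT
  have hfin : a G = -(-1:ℝ) ^ (Fintype.card (Fin n)) := by
    rw [← hmaster]
    exact hcalc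
  rw [hfin, Fintype.card_fin, pow_succ]
  ring
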